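/- Let f be a moving phantom mechanism for m = 3 projects and let V be a locally maximal preference profile, i.e., ℓ(V) ≥ ℓ(V_{-i}, v'_i) for every voter i and every division v'_i. Then there exists a three-type profile V̂ (for f) such that ℓ(V̂) ≥ ℓ(V). -/

import Mathlib

open Finset

/-- A division among `m` projects: coordinates in `[0,1]` summing to `1`. -/
def IsDivision {m : ℕ} (x : Fin m → ℝ) : Prop :=
  (∀ j, 0 ≤ x j ∧ x j ≤ 1) ∧ ∑ j, x j = 1

/-- The ℓ1 distance between two vectors over `Fin m`. -/
noncomputable def l1 {m : ℕ} (x y : Fin m → ℝ) : ℝ := ∑ j, |x j - y j|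

/-- The proportional division (coordinatewise mean) of a profile. -/
noncomputable def propDiv {n m : ℕ} (V : Fin n → Fin m → ℝ) : Fin m → ℝ :=
  fun j => (∑ i, V i j) / (n : ℝ)

/-- The `(k+1)`-th smallest element of a multiset of reals. -/
noncomputable def medianAt (s : Multiset ℝ) (k : ℕ) : ℝ :=
  (s.sort (· ≤ ·)).getD k 0

/-- Voter reports on project `j` together with the `n+1` phantom values `p 0, …, p n`. -/
noncomputable def projValues {n m : ℕ} (V : Fin n → Fin m → ℝ)
    (p : ℕ → ℝ) (j : Fin m) : Multiset ℝ :=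
  (Multiset.map (fun i => V i j) Finset.univ.val) +
    (Multiset.map p (Finset.range (n + 1)).val)

/-- The median (the `(n+1)`-th smallest of the `2n+1` values) of the `n` voter reports
on project `j` together with the `n+1` phantom values. -/
noncomputable def phantomMedian {n m : ℕ} (V : Fin n → Fin m → ℝ)
    (p : ℕ → ℝ) (j : Fin m) : ℝ :=
  medianAt (projValues V p j) n

/-- A phantom system for `n` voters: continuous, weakly increasing functions
`y k : [0,1] → [0,1]`, `k = 0, …, n`, with `y k 0 = 0`, `y k 1 = 1`,
pointwise ordered in `k`. -/
structure PhantomSystem (n : ℕ) where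
  y : ℕ → ℝ → ℝ
  contOn : ∀ k ≤ n, ContinuousOn (y k) (Set.Icc 0 1)
  monoOn : ∀ k ≤ n, MonotoneOn (y k) (Set.Icc 0 1)
  mem_Icc : ∀ k ≤ n, ∀ t ∈ Set.Icc (0:ℝ) 1, y k t ∈ Set.Icc (0:ℝ) 1
  map_zero : ∀ k ≤ n, y k 0 = 0
  map_one : ∀ k ≤ n, y k 1 = 1
  mono_idx : ∀ t ∈ Set.Icc (0:ℝ) 1, ∀ k k', k ≤ k' → k' ≤ n → y k t ≤ y k' t

/-- `f` is the moving phantom mechanism associated with the phantom system `Y`: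
on each profile of divisions, for some `t*` making the medians sum to `1`,
it outputs on each project the median of the voter reports and the phantom values. -/
def IsMovingPhantom {n m : ℕ} (f : (Fin n → Fin m → ℝ) → (Fin m → ℝ))
    (Y : PhantomSystem n) : Prop :=
  ∀ V : Fin n → Fin m → ℝ, (∀ i, IsDivision (V i)) →
    ∃ t ∈ Set.Icc (0:ℝ) 1,
      (∑ j, phantomMedian V (fun k => Y.y k t) j) = 1 ∧
      ∀ j, f V j = phantomMedian V (fun k => Y.y k t) j

/-- Truthfulness of a budget aggregation mechanism: no voter `i` with true peak `V i`
can get an outcome closer (in ℓ1 distance) to her peak by reporting some division `v`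
instead of `V i`. -/
def Truthful {n m : ℕ} (f : (Fin n → Fin m → ℝ) → (Fin m → ℝ)) : Prop :=
  ∀ V : Fin n → Fin m → ℝ, (∀ i, IsDivision (V i)) →
    ∀ i : Fin n, ∀ v : Fin m → ℝ, IsDivision v →
      l1 (f V) (V i) ≤ l1 (f (Function.update V i v)) (V i)

/-- The ℓ1-loss of mechanism `f` on profile `V`. -/
noncomputable def loss {n m : ℕ} (f : (Fin n → Fin m → ℝ) → (Fin m → ℝ))
    (V : Fin n → Fin m → ℝ) : ℝ :=
  l1 (f V) (propDiv V)

/-- The phantom system of the Piecewise Uniform mechanism for `n` voters. -/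
noncomputable def puPhantom (n : ℕ) (k : ℕ) (t : ℝ) : ℝ :=
  if t < 1 / 2 then
    (if (k : ℝ) / (n : ℝ) < 1 / 2 then 0 else 4 * t * (k : ℝ) / (n : ℝ) - 2 * t)
  else
    (if (k : ℝ) / (n : ℝ) < 1 / 2 then (k : ℝ) * (2 * t - 1) / (n : ℝ)
     else (k : ℝ) * (3 - 2 * t) / (n : ℝ) - 2 + 2 * t)

/-- `w` is an output of the Piecewise Uniform mechanism on profile `V`. -/
def IsPUOutcome {n m : ℕ} (V : Fin n → Fin m → ℝ) (w : Fin m → ℝ) : Prop :=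
  ∃ t ∈ Set.Icc (0:ℝ) 1,
    (∑ j, phantomMedian V (fun k => puPhantom n k t) j) = 1 ∧
    ∀ j, w j = phantomMedian V (fun k => puPhantom n k t) j

/-- `w` is an output of the Independent Markets mechanism (phantoms `min (k·t) 1`)
on profile `V`. -/
def IsIMOutcome {n m : ℕ} (V : Fin n → Fin m → ℝ) (w : Fin m → ℝ) : Prop :=
  ∃ t : ℝ, 0 ≤ t ∧
    (∑ j, phantomMedian V (fun k => min ((k : ℝ) * t) 1) j) = 1 ∧
    ∀ j, w j = phantomMedian V (fun k => min ((k : ℝ) * t) 1) j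

/-- A single-minded division: it assigns the whole budget to one project. -/
def SingleMindedDiv {m : ℕ} (v : Fin m → ℝ) : Prop := ∃ j, v j = 1

/-- A double-minded division relative to an outcome `w` (three projects): it agrees with
`w` on one project `j`, proposes `1 - w j` on another project, and `0` on the third. -/
def DoubleMindedDiv (w v : Fin 3 → ℝ) : Prop :=
  ∃ j j' : Fin 3, j ≠ j' ∧ v j = w j ∧ v j' = 1 - w j ∧
    ∀ k, k ≠ j → k ≠ j' → v k = 0

/-- A three-type profile for mechanism `f`: each voter is fully-satisfied,
double-minded, or single-minded. -/
def ThreeTypeProfile {n : ℕ} (f : (Fin n → Fin 3 → ℝ) → (Fin 3 → ℝ))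
    (V : Fin n → Fin 3 → ℝ) : Prop :=
  ∀ i, V i = f V ∨ DoubleMindedDiv (f V) (V i) ∨ SingleMindedDiv (V i)

/-- The single-minded division fully supporting project `j`. -/
noncomputable def singleDiv (j : Fin 3) : Fin 3 → ℝ :=
  fun j' => if j' = j then 1 else 0

/-- The double-minded division proposing `x k` on project `k`, `1 - x k` on
project `j` and `0` on the remaining project. -/
noncomputable def doubleDiv (x : Fin 3 → ℝ) (k j : Fin 3) : Fin 3 → ℝ :=
  fun j' => if j' = k then x k else if j' = j then 1 - x k else 0

/-- A utilitarian mechanism: it always returns a division minimizing the total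
ℓ1 distance (social cost) to the voters' proposals. -/
def Utilitarian {n m : ℕ} (f : (Fin n → Fin m → ℝ) → (Fin m → ℝ)) : Prop :=
  ∀ V : Fin n → Fin m → ℝ, (∀ i, IsDivision (V i)) →
    IsDivision (f V) ∧
    ∀ x : Fin m → ℝ, IsDivision x → (∑ i, l1 (V i) (f V)) ≤ ∑ i, l1 (V i) x



lemma sorted_getElem_mono {l : List ℝ} (hs : l.Pairwise (· ≤ ·)) {i j : ℕ}
    (hij : i ≤ j) (hj : j < l.length) : l[i]'(by omega) ≤ l[j]'hj := by
  rcases Nat.eq_or_lt_of_le hij with heq | hlt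
  · subst heq; exact le_refl _
  · exact List.pairwise_iff_getElem.mp hs i j (by omega) hj hlt

lemma countP_take_drop {α} (p : α → Bool) (l : List α) (j : ℕ) :
    l.countP p = (l.take j).countP p + (l.drop j).countP p := by
  rw [← List.countP_append, List.take_append_drop]

open Classical in
lemma medianAt_le (s : Multiset ℝ) (k : ℕ) (hk : k < Multiset.card s) (θ : ℝ)
    (h : k + 1 ≤ Multiset.countP (fun x => x ≤ θ) s) : medianAt s k ≤ θ := by
  classical
  set l := s.sort (· ≤ ·) with hl
  have hlen : l.length = Multiset.card s := Multiset.length_sort _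
  have hk' : k < l.length := by omega
  have hsorted : l.Pairwise (· ≤ ·) := Multiset.pairwise_sort s _
  rw [medianAt, ← hl, List.getD_eq_getElem l 0 hk']
  by_contra hgt
  push_neg at hgt
  have hcount : Multiset.countP (fun x => x ≤ θ) s ≤ k := by
    have hsl : (l : Multiset ℝ) = s := Multiset.sort_eq s _
    rw [← hsl, Multiset.coe_countP]
    have hsplit := countP_take_drop (fun x => decide (x ≤ θ)) l k
    rw [hsplit]
    have h1 : (l.take k).countP (fun x => decide (x ≤ θ)) ≤ k := by
      calc (l.take k).countP (fun x => decide (x ≤ θ)) ≤ (l.take k).length :=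
            List.countP_le_length
        _ ≤ k := by simp [List.length_take]
    have h2 : (l.drop k).countP (fun x => decide (x ≤ θ)) = 0 := by
      rw [List.countP_eq_zero]
      intro x hx
      simp only [decide_eq_true_eq]
      rw [List.mem_iff_getElem] at hx
      obtain ⟨i, hi, rfl⟩ := hx
      have hi' : k + i < l.length := by
        have := (List.length_drop (i := k) (l := l)) ▸ hi; omega
      rw [List.getElem_drop]
      have hmono : l[k]'hk' ≤ l[k + i]'hi' := sorted_getElem_mono hsorted (by omega) hi'
      intro hle
      exact absurd (lt_of_le_of_lt (hmono.trans hle) hgt) (lt_irrefl _)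
    omega
  omega

open Classical in
lemma le_medianAt (s : Multiset ℝ) (k : ℕ) (hk : k < Multiset.card s) (θ : ℝ)
    (h : Multiset.countP (fun x => x < θ) s ≤ k) : θ ≤ medianAt s k := by
  classical
  set l := s.sort (· ≤ ·) with hl
  have hlen : l.length = Multiset.card s := Multiset.length_sort _
  have hk' : k < l.length := by omega
  have hsorted : l.Pairwise (· ≤ ·) := Multiset.pairwise_sort s _
  rw [medianAt, ← hl, List.getD_eq_getElem l 0 hk']
  by_contra hgt
  push_neg at hgt
  have hcount : k + 1 ≤ Multiset.countP (fun x => x < θ) s := by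
    have hsl : (l : Multiset ℝ) = s := Multiset.sort_eq s _
    rw [← hsl, Multiset.coe_countP]
    have h1 : (l.take (k+1)).countP (fun x => decide (x < θ)) = k + 1 := by
      rw [List.countP_eq_length.2, List.length_take]
      · omega
      · intro x hx
        simp only [decide_eq_true_eq]
        rw [List.mem_iff_getElem] at hx
        obtain ⟨i, hi, rfl⟩ := hx
        have hi' : i < l.length := by
          have := (List.length_take (i := k+1) (l := l)) ▸ hi
          omega
        rw [List.getElem_take]
        have : l[i]'hi' ≤ l[k]'hk' := by
          apply sorted_getElem_mono hsorted _ hk'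
          have := (List.length_take (i := k+1) (l := l)) ▸ hi
          omega
        exact lt_of_le_of_lt this hgt
    have hsplit := countP_take_drop (fun x => decide (x < θ)) l (k+1)
    omega
  omega

lemma medianAt_mem (s : Multiset ℝ) (k : ℕ) (hk : k < Multiset.card s) :
    medianAt s k ∈ s := by
  classical
  set l := s.sort (· ≤ ·) with hl
  have hlen : l.length = Multiset.card s := Multiset.length_sort _
  have hk' : k < l.length := by omega
  rw [medianAt, ← hl, List.getD_eq_getElem l 0 hk']
  have : l[k]'hk' ∈ l := List.getElem_mem _
  exact (Multiset.mem_sort _).1 this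

open Classical in
lemma countP_le_medianAt (s : Multiset ℝ) (k : ℕ) (hk : k < Multiset.card s) :
    k + 1 ≤ Multiset.countP (fun x => x ≤ medianAt s k) s := by
  classical
  set l := s.sort (· ≤ ·) with hl
  have hlen : l.length = Multiset.card s := Multiset.length_sort _
  have hk' : k < l.length := by omega
  have hsorted : l.Pairwise (· ≤ ·) := Multiset.pairwise_sort s _
  have hmed : medianAt s k = l[k]'hk' := by
    rw [medianAt, ← hl, List.getD_eq_getElem l 0 hk']
  have hsl : (l : Multiset ℝ) = s := Multiset.sort_eq s _
  rw [hmed, ← hsl, Multiset.coe_countP]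
  have h1 : (l.take (k+1)).countP (fun x => decide (x ≤ l[k]'hk')) = k + 1 := by
    rw [List.countP_eq_length.2, List.length_take]
    · omega
    · intro x hx
      simp only [decide_eq_true_eq]
      rw [List.mem_iff_getElem] at hx
      obtain ⟨i, hi, rfl⟩ := hx
      have hlt : i < k + 1 := by
        have := (List.length_take (i := k+1) (l := l)) ▸ hi; omega
      have hi' : i < l.length := by omega
      rw [List.getElem_take]
      exact sorted_getElem_mono hsorted (by omega) hk'
  have hsplit := countP_take_drop (fun x => decide (x ≤ l[k]'hk')) l (k+1)
  omega

open Classical in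
lemma countP_lt_medianAt (s : Multiset ℝ) (k : ℕ) (hk : k < Multiset.card s) :
    Multiset.countP (fun x => x < medianAt s k) s ≤ k := by
  classical
  set l := s.sort (· ≤ ·) with hl
  have hlen : l.length = Multiset.card s := Multiset.length_sort _
  have hk' : k < l.length := by omega
  have hsorted : l.Pairwise (· ≤ ·) := Multiset.pairwise_sort s _
  have hmed : medianAt s k = l[k]'hk' := by
    rw [medianAt, ← hl, List.getD_eq_getElem l 0 hk']
  have hsl : (l : Multiset ℝ) = s := Multiset.sort_eq s _
  rw [hmed, ← hsl, Multiset.coe_countP]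
  have h1 : (l.take k).countP (fun x => decide (x < l[k]'hk')) ≤ k := by
    calc (l.take k).countP (fun x => decide (x < l[k]'hk')) ≤ (l.take k).length :=
          List.countP_le_length
      _ ≤ k := by simp [List.length_take]
  have h2 : (l.drop k).countP (fun x => decide (x < l[k]'hk')) = 0 := by
    rw [List.countP_eq_zero]
    intro x hx
    simp only [decide_eq_true_eq]
    rw [List.mem_iff_getElem] at hx
    obtain ⟨i, hi, rfl⟩ := hx
    have hi' : k + i < l.length := by
      have := (List.length_drop (i := k) (l := l)) ▸ hi; omega
    rw [List.getElem_drop]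
    exact not_lt.2 (sorted_getElem_mono hsorted (by omega) hi')
  have hsplit := countP_take_drop (fun x => decide (x < l[k]'hk')) l k
  omega

lemma medianAt_eq (s : Multiset ℝ) (k : ℕ) (hk : k < Multiset.card s) (θ : ℝ)
    (h1 : k + 1 ≤ Multiset.countP (fun x => x ≤ θ) s)
    (h2 : Multiset.countP (fun x => x < θ) s ≤ k) : medianAt s k = θ :=
  le_antisymm (medianAt_le s k hk θ h1) (le_medianAt s k hk θ h2)
lemma countP_map_le_map {α : Type*} (m : Multiset α) (g h : α → ℝ) (p : ℝ → Prop)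
    [DecidablePred p] (H : ∀ a ∈ m, p (g a) → p (h a)) :
    Multiset.countP p (m.map g) ≤ Multiset.countP p (m.map h) := by
  classical
  induction m using Multiset.induction_on with
  | empty => simp
  | cons a s ih =>
    simp only [Multiset.map_cons, Multiset.countP_cons]
    have h1 := ih (fun x hx => H x (Multiset.mem_cons_of_mem hx))
    have h2 := H a (Multiset.mem_cons_self a s)
    simp only [show (fun x => p x) = p from rfl] at h1 ⊢
    by_cases hga : p (g a)
    · rw [if_pos hga, if_pos (h2 hga)]; omega
    · rw [if_neg hga]; split <;> omega

lemma projValues_card {n m : ℕ} (V : Fin n → Fin m → ℝ) (p : ℕ → ℝ) (j : Fin m) :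
    Multiset.card (projValues V p j) = n + (n + 1) := by
  simp [projValues]; omega

lemma countP_projValues {n m : ℕ} (V : Fin n → Fin m → ℝ) (p : ℕ → ℝ) (j : Fin m)
    (pr : ℝ → Prop) [DecidablePred pr] :
    Multiset.countP pr (projValues V p j)
      = Multiset.countP pr (Multiset.map (fun i => V i j) Finset.univ.val)
        + Multiset.countP pr (Multiset.map p (Finset.range (n + 1)).val) := by
  rw [projValues, Multiset.countP_add]

lemma phantomMedian_mono {n m : ℕ} (V : Fin n → Fin m → ℝ) (p q : ℕ → ℝ)
    (hpq : ∀ k, k ≤ n → p k ≤ q k) (j : Fin m) :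
    phantomMedian V p j ≤ phantomMedian V q j := by
  classical
  have hcard : n < Multiset.card (projValues V p j) := by rw [projValues_card]; omega
  have hcard' : n < Multiset.card (projValues V q j) := by rw [projValues_card]; omega
  set θ := phantomMedian V q j with hθ
  apply medianAt_le _ n hcard θ
  have h1 : n + 1 ≤ Multiset.countP (fun x => x ≤ θ) (projValues V q j) :=
    countP_le_medianAt _ n hcard'
  refine le_trans ?_ (le_trans h1 ?_)
  · omega
  · rw [countP_projValues, countP_projValues]
    have := countP_map_le_map (Finset.range (n+1)).val q p (fun x => x ≤ θ)
      (fun k hk hq => le_trans (hpq k (by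
        have : k < n + 1 := Finset.mem_range.mp hk
        omega)) hq)
    omega

lemma phantomMedian_transfer {n m : ℕ} (V W : Fin n → Fin m → ℝ) (p : ℕ → ℝ) (j : Fin m)
    (θ : ℝ) (hθ : phantomMedian V p j = θ)
    (H : ∀ i, (V i j ≤ θ → W i j ≤ θ) ∧ (θ ≤ V i j → θ ≤ W i j)) :
    phantomMedian W p j = θ := by
  classical
  have hcardV : n < Multiset.card (projValues V p j) := by rw [projValues_card]; omega
  have hcardW : n < Multiset.card (projValues W p j) := by rw [projValues_card]; omega
  apply medianAt_eq _ n hcardW θ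
  · have h1 : n + 1 ≤ Multiset.countP (fun x => x ≤ θ) (projValues V p j) := by
      rw [← hθ]; exact countP_le_medianAt _ n hcardV
    rw [countP_projValues] at h1 ⊢
    have := countP_map_le_map (Finset.univ.val : Multiset (Fin n))
      (fun i => V i j) (fun i => W i j) (fun x => x ≤ θ) (fun i _ => (H i).1)
    omega
  · have h2 : Multiset.countP (fun x => x < θ) (projValues V p j) ≤ n := by
      rw [← hθ]; exact countP_lt_medianAt _ n hcardV
    rw [countP_projValues] at h2 ⊢
    have := countP_map_le_map (Finset.univ.val : Multiset (Fin n))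
      (fun i => W i j) (fun i => V i j) (fun x => x < θ)
      (fun i _ hw => by
        by_contra hv
        exact absurd ((H i).2 (not_lt.1 hv)) (not_le.mpr hw))
    omega


lemma triple_eq_univ {a b k : Fin 3} (hab : a ≠ b) (hka : k ≠ a) (hkb : k ≠ b) :
    ({a, b, k} : Finset (Fin 3)) = Finset.univ := by
  apply Finset.eq_univ_of_card
  rw [Finset.card_insert_of_notMem (by simp [hab, hka.symm]),
    Finset.card_insert_of_notMem (by simp [hkb.symm]), Finset.card_singleton]
  simp

lemma sum_triple {a b k : Fin 3} (hab : a ≠ b) (hka : k ≠ a) (hkb : k ≠ b)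
    (g : Fin 3 → ℝ) : ∑ j, g j = g a + g b + g k := by
  rw [← triple_eq_univ hab hka hkb,
    Finset.sum_insert (by simp [hab, hka.symm]),
    Finset.sum_insert (by simp [hkb.symm]), Finset.sum_singleton]
  ring

lemma mem_triple {a b k : Fin 3} (hab : a ≠ b) (hka : k ≠ a) (hkb : k ≠ b)
    (j : Fin 3) : j = a ∨ j = b ∨ j = k := by
  have := triple_eq_univ hab hka hkb ▸ Finset.mem_univ j
  simpa using this

lemma exists_replacement (w v σ : Fin 3 → ℝ) (hw : IsDivision w) (hv : IsDivision v)
    (hσ : ∀ j, σ j = 1 ∨ σ j = -1) :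
    ∃ u : Fin 3 → ℝ, IsDivision u ∧
      (u = w ∨ DoubleMindedDiv w u ∨ SingleMindedDiv u) ∧
      (∀ j, (v j ≤ w j → u j ≤ w j) ∧ (w j ≤ v j → w j ≤ u j)) ∧
      (∑ j, σ j * (v j - w j)) ≤ ∑ j, σ j * (u j - w j) := by
  classical
  set c := ∑ j, σ j * (v j - w j) with hc
  by_cases hcpos : c ≤ 0
  · refine ⟨w, hw, Or.inl rfl, fun j => ⟨fun _ => le_refl _, fun _ => le_refl _⟩, ?_⟩
    simp only [sub_self, mul_zero, Finset.sum_const_zero]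
    exact hcpos
  push_neg at hcpos
  have hsum0 : ∑ j, (v j - w j) = 0 := by
    rw [Finset.sum_sub_distrib, hv.2, hw.2]; ring
  have ha : ∃ a, σ a = 1 ∧ w a < v a := by
    by_contra hno
    push_neg at hno
    have : ∑ j, (σ j + 1) * (v j - w j) = c := by
      have e : ∑ j, (σ j + 1) * (v j - w j) = c + ∑ j, (v j - w j) := by
        rw [hc, ← Finset.sum_add_distrib]
        congr 1; funext j; ring
      rw [e, hsum0, add_zero]
    have hle : ∑ j, (σ j + 1) * (v j - w j) ≤ 0 := by
      apply Finset.sum_nonpos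
      intro j _
      rcases hσ j with h1 | h1
      · have h2 := hno j h1
        nlinarith [h2]
      · rw [h1]; ring_nf; simp
    linarith
  have hb : ∃ b, σ b = -1 ∧ v b < w b := by
    by_contra hno
    push_neg at hno
    have : ∑ j, (σ j - 1) * (v j - w j) = c := by
      have e : ∑ j, (σ j - 1) * (v j - w j) = c - ∑ j, (v j - w j) := by
        rw [hc, ← Finset.sum_sub_distrib]
        congr 1; funext j; ring
      rw [e, hsum0, sub_zero]
    have hle : ∑ j, (σ j - 1) * (v j - w j) ≤ 0 := by
      apply Finset.sum_nonpos
      intro j _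
      rcases hσ j with h1 | h1
      · rw [h1]; ring_nf; simp
      · have h2 := hno j h1
        nlinarith [h2]
    linarith
  obtain ⟨a, hσa, hva⟩ := ha
  obtain ⟨b, hσb, hvb⟩ := hb
  have hab : a ≠ b := by intro h; rw [h, hσb] at hσa; norm_num at hσa
  have hkex : ∀ x y : Fin 3, x ≠ y → ∃ z : Fin 3, z ≠ x ∧ z ≠ y := by decide
  obtain ⟨k, hka, hkb⟩ := hkex a b hab
  have hak : a ≠ k := Ne.symm hka
  have hbk : b ≠ k := Ne.symm hkb
  have hba : b ≠ a := Ne.symm hab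
  have hsumw : w a + w b + w k = 1 := by
    rw [← sum_triple hab hka hkb]; exact hw.2
  have hsumδ : (v a - w a) + (v b - w b) + (v k - w k) = 0 := by
    have := sum_triple hab hka hkb (fun j => v j - w j)
    rw [hsum0] at this
    linarith
  have hcval : c = σ a * (v a - w a) + σ b * (v b - w b) + σ k * (v k - w k) := by
    rw [hc]; exact sum_triple hab hka hkb _
  have hwb0 : 0 ≤ w b := (hw.1 b).1
  have hwk0 : 0 ≤ w k := (hw.1 k).1
  have hwa0 : 0 ≤ w a := (hw.1 a).1
  have hwa1 : w a ≤ 1 := (hw.1 a).2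
  have hwk1 : w k ≤ 1 := (hw.1 k).2
  have hvb0 : 0 ≤ v b := (hv.1 b).1
  have hvk0 : 0 ≤ v k := (hv.1 k).1
  by_cases hbranch : σ k = -1 ∧ v k < w k
  · -- single-minded on a
    obtain ⟨hσk, hvk⟩ := hbranch
    have ua : singleDiv a a = 1 := by simp [singleDiv]
    have ub : singleDiv a b = 0 := by simp [singleDiv, hba]
    have uk : singleDiv a k = 0 := by simp [singleDiv, hka]
    refine ⟨singleDiv a, ?_, Or.inr (Or.inr ⟨a, ua⟩), ?_, ?_⟩
    · constructor
      · intro j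
        by_cases hja : j = a <;> simp [singleDiv, hja]
      · simp [singleDiv]
    · intro j
      rcases mem_triple hab hka hkb j with hj | hj | hj <;> rw [hj]
      · exact ⟨fun h => absurd h (not_le.2 hva), fun _ => by rw [ua]; exact hwa1⟩
      · exact ⟨fun _ => by rw [ub]; exact hwb0, fun h => absurd h (not_le.2 hvb)⟩
      · exact ⟨fun _ => by rw [uk]; exact hwk0, fun h => absurd h (not_le.2 hvk)⟩
    · have hscore : ∑ j, σ j * (singleDiv a j - w j)
          = σ a * (1 - w a) + σ b * (0 - w b) + σ k * (0 - w k) := by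
        rw [sum_triple hab hka hkb (fun j => σ j * (singleDiv a j - w j))]
        rw [ua, ub, uk]
      rw [hscore, hσa, hσb, hσk, hcval, hσa, hσb, hσk]
      nlinarith [hsumδ, hsumw, hvb0, hvk0]
  · -- double-minded: k fixed at w k, a gets 1 - w k, b gets 0
    have hdk : σ k = 1 ∨ w k ≤ v k := by
      rcases hσ k with h | h
      · exact Or.inl h
      · right
        by_contra hlt
        exact hbranch ⟨h, not_le.1 hlt⟩
    have ua : doubleDiv w k a a = 1 - w k := by simp [doubleDiv, hak]
    have ub : doubleDiv w k a b = 0 := by simp [doubleDiv, hbk, hba]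
    have uk : doubleDiv w k a k = w k := by simp [doubleDiv]
    refine ⟨doubleDiv w k a, ?_, Or.inr (Or.inl ⟨k, a, hka, uk, ua, ?_⟩), ?_, ?_⟩
    · constructor
      · intro j
        rcases mem_triple hab hka hkb j with hj | hj | hj <;> rw [hj]
        · rw [ua]; constructor <;> linarith
        · rw [ub]; constructor <;> linarith
        · rw [uk]; exact ⟨hwk0, hwk1⟩
      · rw [sum_triple hab hka hkb (fun j => doubleDiv w k a j)]
        rw [ua, ub, uk]; ring
    · intro l hlk hla
      simp [doubleDiv, hlk, hla]
    · intro j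
      rcases mem_triple hab hka hkb j with hj | hj | hj <;> rw [hj]
      · refine ⟨fun h => absurd h (not_le.2 hva), fun _ => ?_⟩
        rw [ua]; linarith
      · exact ⟨fun _ => by rw [ub]; exact hwb0, fun h => absurd h (not_le.2 hvb)⟩
      · exact ⟨fun _ => le_of_eq uk, fun _ => le_of_eq uk.symm⟩
    · have hscore : ∑ j, σ j * (doubleDiv w k a j - w j)
          = σ a * ((1 - w k) - w a) + σ b * (0 - w b) + σ k * (w k - w k) := by
        rw [sum_triple hab hka hkb (fun j => σ j * (doubleDiv w k a j - w j))]
        rw [ua, ub, uk]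
      rw [hscore, hσa, hσb, hcval, hσa, hσb]
      rcases hdk with h | h
      · rw [h]; nlinarith [hsumδ, hsumw, hvb0]
      · rcases hσ k with h2 | h2
        · rw [h2]; nlinarith [hsumδ, hsumw, hvb0]
        · rw [h2]; nlinarith [hsumδ, hsumw, hvb0, h]


/-- Let `f` be a moving phantom mechanism for `m = 3` and `V` a locally
maximal profile (no single voter change increases the ℓ1-loss). Then there is a
three-type profile `W` with `ℓ(W) ≥ ℓ(V)`. -/
theorem worst_case_three_type {n : ℕ} (hn : 1 ≤ n)
    (f : (Fin n → Fin 3 → ℝ) → (Fin 3 → ℝ)) (Y : PhantomSystem n)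
    (hf : IsMovingPhantom f Y)
    (V : Fin n → Fin 3 → ℝ) (hV : ∀ i, IsDivision (V i))
    (hmax : ∀ i : Fin n, ∀ v' : Fin 3 → ℝ, IsDivision v' →
      loss f (Function.update V i v') ≤ loss f V) :
    ∃ W : Fin n → Fin 3 → ℝ, (∀ i, IsDivision (W i)) ∧
      ThreeTypeProfile f W ∧ loss f V ≤ loss f W := by
  classical
  obtain ⟨t, ht, hsum1, hval⟩ := hf V hV
  set p : ℕ → ℝ := fun k => Y.y k t with hp
  set w : Fin 3 → ℝ := f V with hwdef
  have hmedV : ∀ j, phantomMedian V p j = w j := fun j => (hval j).symm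
  have hcard : ∀ (X : Fin n → Fin 3 → ℝ) (q : ℕ → ℝ) (j : Fin 3),
      n < Multiset.card (projValues X q j) := by
    intro X q j; rw [projValues_card]; omega
  -- w is a division
  have hwdiv : IsDivision w := by
    constructor
    · intro j
      have hmem : phantomMedian V p j ∈ projValues V p j :=
        medianAt_mem _ n (hcard V p j)
      rw [hmedV j] at hmem
      rw [projValues, Multiset.mem_add] at hmem
      rcases hmem with hm | hm
      · obtain ⟨i, _, hi⟩ := Multiset.mem_map.1 hm
        rw [← hi]; exact (hV i).1 j
      · obtain ⟨k, hk, hkv⟩ := Multiset.mem_map.1 hm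
        have hkn : k ≤ n := by
          have := Finset.mem_range.1 (Finset.mem_def.2 hk)
          omega
        have := Y.mem_Icc k hkn t ht
        rw [← hkv]
        exact ⟨this.1, this.2⟩
    · rw [show (fun j => w j) = w from rfl] at *
      calc ∑ j, w j = ∑ j, phantomMedian V p j := by
            apply Finset.sum_congr rfl; intro j _; rw [hmedV j]
        _ = 1 := hsum1
  -- the sign vector
  set σ : Fin 3 → ℝ := fun j => if w j ≤ propDiv V j then 1 else -1 with hσdef
  have hσ : ∀ j, σ j = 1 ∨ σ j = -1 := by
    intro j; rw [hσdef]; dsimp only; split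
    · exact Or.inl rfl
    · exact Or.inr rfl
  -- choose replacements
  choose W hWdiv hWtype hWside hWscore using
    fun i => exists_replacement w (V i) σ hwdiv (hV i) hσ
  -- medians of W at t are w
  have hmedW : ∀ j, phantomMedian W p j = w j := by
    intro j
    exact phantomMedian_transfer V W p j (w j) (hmedV j) (fun i => hWside i j)
  have hsumW : ∑ j, phantomMedian W p j = 1 := by
    rw [Finset.sum_congr rfl (fun j _ => hmedW j)]
    exact hwdiv.2
  obtain ⟨t', ht', hsum1', hval'⟩ := hf W hWdiv
  have hfW : ∀ j, f W j = w j := by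
    have hmono : ∀ (t₁ t₂ : ℝ), t₁ ∈ Set.Icc (0:ℝ) 1 → t₂ ∈ Set.Icc (0:ℝ) 1 → t₁ ≤ t₂ →
        ∀ j, phantomMedian W (fun k => Y.y k t₁) j ≤ phantomMedian W (fun k => Y.y k t₂) j := by
      intro t₁ t₂ h₁ h₂ h₁₂ j
      exact phantomMedian_mono W _ _ (fun k hk => Y.monoOn k hk h₁ h₂ h₁₂) j
    rcases le_total t t' with htt | htt
    · have hle := fun j => hmono t t' ht ht' htt j
      have heq : ∀ j ∈ Finset.univ, phantomMedian W p j = phantomMedian W (fun k => Y.y k t') j := by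
        rw [← Finset.sum_eq_sum_iff_of_le (fun j _ => hle j)]
        rw [hsumW, hsum1']
      intro j
      rw [hval' j, ← heq j (Finset.mem_univ j), hmedW j]
    · have hle := fun j => hmono t' t ht' ht htt j
      have heq : ∀ j ∈ Finset.univ, phantomMedian W (fun k => Y.y k t') j = phantomMedian W p j := by
        rw [← Finset.sum_eq_sum_iff_of_le (fun j _ => hle j)]
        rw [hsumW, hsum1']
      intro j
      rw [hval' j, heq j (Finset.mem_univ j), hmedW j]
  refine ⟨W, hWdiv, ?_, ?_⟩
  -- three-type
  · intro i
    have hfWeq : f W = w := funext hfW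
    rcases hWtype i with h | h | h
    · exact Or.inl (by rw [h, hfWeq])
    · exact Or.inr (Or.inl (by rw [hfWeq]; exact h))
    · exact Or.inr (Or.inr h)
  -- loss comparison
  · have hn0 : (0:ℝ) < (n:ℝ) := by
      have : (1:ℝ) ≤ (n:ℝ) := by exact_mod_cast hn
      linarith
    have e : ∀ (X : Fin n → Fin 3 → ℝ), ∑ j, σ j * (propDiv X j - w j)
        = (∑ i, ∑ j, σ j * (X i j - w j)) / (n:ℝ) := by
      intro X
      rw [Finset.sum_comm, Finset.sum_div]
      apply Finset.sum_congr rfl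
      intro j _
      have h1 : ∑ i, σ j * (X i j - w j) = σ j * ((∑ i, X i j) - (n:ℝ) * w j) := by
        rw [← Finset.mul_sum, Finset.sum_sub_distrib, Finset.sum_const,
          Finset.card_univ, Fintype.card_fin, nsmul_eq_mul]
      rw [h1, propDiv]
      field_simp
      try ring
    have key : ∑ i, ∑ j, σ j * (V i j - w j) ≤ ∑ i, ∑ j, σ j * (W i j - w j) :=
      Finset.sum_le_sum (fun i _ => hWscore i)
    have step1 : loss f V = ∑ j, σ j * (propDiv V j - w j) := by
      rw [loss, l1]
      apply Finset.sum_congr rfl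
      intro j _
      rw [← hwdef, hσdef]
      dsimp only
      split
      · rw [abs_of_nonpos (by linarith), one_mul]; ring
      · rename_i hlt
        push_neg at hlt
        rw [abs_of_nonneg (by linarith)]; ring
    have step2 : ∑ j, σ j * (propDiv W j - w j) ≤ loss f W := by
      rw [loss, l1]
      apply Finset.sum_le_sum
      intro j _
      rw [hfW j]
      rcases hσ j with h | h <;> rw [h]
      · rw [abs_sub_comm]
        calc 1 * (propDiv W j - w j) = propDiv W j - w j := one_mul _
          _ ≤ |propDiv W j - w j| := le_abs_self _
      · calc -1 * (propDiv W j - w j) = w j - propDiv W j := by ring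
          _ ≤ |w j - propDiv W j| := le_abs_self _
    calc loss f V = ∑ j, σ j * (propDiv V j - w j) := step1
      _ = (∑ i, ∑ j, σ j * (V i j - w j)) / (n:ℝ) := e V
      _ ≤ (∑ i, ∑ j, σ j * (W i j - w j)) / (n:ℝ) := by
          exact (div_le_div_iff_of_pos_right hn0).mpr key
      _ = ∑ j, σ j * (propDiv W j - w j) := (e W).symm
      _ ≤ loss f W := step2
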